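/- Suppose λ_1 = 0 with multiplicity r (i.e., λ_1 = ⋯ = λ_r = 0 < λ_{r+1}), that [g_par]_i = 0 for 1 ≤ i ≤ r, and that ‖Λ^† g_par‖₂ ≤ δ, where Λ^† denotes the Moore–Penrose pseudoinverse of Λ. Then v* = −Λ^† g_par is a global minimizer of q_par(v) = g_par^T v + (1/2) v^T Λ v over the ball {v ∈ ℝ^{k+1} : ‖v‖₂ ≤ δ}. -/

import Mathlib

open Matrix

/-- The Euclidean (two-)norm of a vector in `ℝ^m`. -/
noncomputable def norm2 {m : ℕ} (x : Fin m → ℝ) : ℝ := Real.sqrt (∑ i, x i ^ 2)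

/-- The Moore–Penrose pseudoinverse of the diagonal matrix `diag d`. -/
noncomputable def diagPinv {m : ℕ} (d : Fin m → ℝ) : Matrix (Fin m) (Fin m) ℝ :=
  Matrix.diagonal (fun i => if d i = 0 then 0 else (d i)⁻¹)

/-- Suppose `Λ = diag(λ₁,…,λ_{k+1})` with `λ₁ ≤ … ≤ λ_{k+1}`,
`λ₁ = ⋯ = λ_r = 0 < λ_{r+1}` (indices `1,…,k+1`; here 0-based), `[g_par]_i = 0` for
`1 ≤ i ≤ r`, and `‖Λ† g_par‖₂ ≤ δ`.  Then `v* = -Λ† g_par` is a global minimizer of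
`q_par(v) = g_parᵀ v + (1/2) vᵀ Λ v` over `{v : ‖v‖₂ ≤ δ}`. -/
theorem qpar_minimizer_singular
    (k : ℕ) (lam : Fin (k + 1) → ℝ) (hmono : Monotone lam)
    (gpar : Fin (k + 1) → ℝ) (δ : ℝ) (hδ : 0 < δ)
    (qpar : (Fin (k + 1) → ℝ) → ℝ)
    (hq : ∀ v, qpar v = gpar ⬝ᵥ v + (1 / 2) * (v ⬝ᵥ (Matrix.diagonal lam).mulVec v))
    (r : ℕ) (hr1 : 1 ≤ r) (hr2 : r < k + 1)
    (hzero : ∀ i : Fin (k + 1), (i : ℕ) < r → lam i = 0)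
    (hpos : 0 < lam ⟨r, hr2⟩)
    (hgzero : ∀ i : Fin (k + 1), (i : ℕ) < r → gpar i = 0)
    (hnorm : norm2 ((diagPinv lam).mulVec gpar) ≤ δ) :
    norm2 (-(diagPinv lam).mulVec gpar) ≤ δ ∧
      ∀ v : Fin (k + 1) → ℝ, norm2 v ≤ δ →
        qpar (-(diagPinv lam).mulVec gpar) ≤ qpar v := by

  set w : Fin (k+1) → ℝ := -(diagPinv lam).mulVec gpar with hw
  have hwev : ∀ i, w i = -(if lam i = 0 then 0 else (lam i)⁻¹) * gpar i := by
    intro i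
    simp [hw, diagPinv, Matrix.mulVec_diagonal]
  have hlam : ∀ i, 0 ≤ lam i ∧ (lam i = 0 → gpar i = 0) := by
    intro i
    by_cases h : (i : ℕ) < r
    · exact ⟨le_of_eq (hzero i h).symm, fun _ => hgzero i h⟩
    · have : lam ⟨r, hr2⟩ ≤ lam i := hmono (by exact not_lt.mp h)
      exact ⟨le_of_lt (lt_of_lt_of_le hpos this), fun h0 => absurd (h0 ▸ lt_of_lt_of_le hpos this) (lt_irrefl 0)⟩
  constructor
  · have : norm2 w = norm2 ((diagPinv lam).mulVec gpar) := by
      unfold norm2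
      congr 1
      apply Finset.sum_congr rfl
      intro i _
      simp [hw]
    linarith [this, hnorm]
  · intro v hv
    rw [hq, hq]
    have key : ∀ i : Fin (k+1),
        gpar i * w i + (1/2) * (w i * (lam i * w i)) ≤
        gpar i * v i + (1/2) * (v i * (lam i * v i)) := by
      intro i
      obtain ⟨hnn, hz⟩ := hlam i
      rcases eq_or_lt_of_le hnn with h0 | hp
      · have hg := hz h0.symm
        rw [hwev i, hg, ← h0]
        ring_nf
        simp
      · have hne : lam i ≠ 0 := ne_of_gt hp
        rw [hwev i]
        simp only [hne, if_false]
        have h2 : (-(lam i)⁻¹ * gpar i) * (lam i * (-(lam i)⁻¹ * gpar i))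
            = (lam i)⁻¹ * gpar i ^ 2 := by field_simp
        have h3 : gpar i * (-(lam i)⁻¹ * gpar i) = -((lam i)⁻¹ * gpar i ^ 2) := by ring
        rw [h2, h3]
        have h4 : lam i * ((lam i)⁻¹ * gpar i ^ 2) = gpar i ^ 2 := by field_simp
        nlinarith [sq_nonneg (lam i * v i + gpar i), h4, hp]
    have expand : ∀ u : Fin (k+1) → ℝ,
        gpar ⬝ᵥ u + (1/2) * (u ⬝ᵥ (Matrix.diagonal lam).mulVec u)
        = ∑ i, (gpar i * u i + (1/2) * (u i * (lam i * u i))) := by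
      intro u
      simp [dotProduct, Matrix.mulVec_diagonal, Finset.mul_sum, Finset.sum_add_distrib]
    rw [expand, expand]
    exact Finset.sum_le_sum (fun i _ => key i)
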